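/- Let n ≥ 3, ν₀ > 0, c > 0 and C₀ > 0. Let (ν_k)_{k≥1} be a sequence of real numbers with ν_k ≥ ν₀ and ν_k ≥ c(1+k)^{1/(n−1)} for every k, and let (a_k)_{k≥1} be nonnegative reals with a_k ≤ C₀ (1+ν_k²)^{(n−2)/2} for every k. Then there exists a constant C depending only on n, ν₀, c, C₀ such that for all 0 < z ≤ 1, Σ_{k=1}^∞ a_k |J_{ν_k}(z)| ≤ C z^{ν₀}. -/

import Mathlib

open MeasureTheory

/-- The Bessel function of order `ν > -1/2`, via the Poisson integral representation:
`J_ν(r) = (r/2)^ν / (Γ(ν+1/2)Γ(1/2)) ∫_{-1}^1 e^{isr} (1-s²)^{(2ν-1)/2} ds`. -/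
noncomputable def besselJ (ν r : ℝ) : ℂ :=
  ((((r / 2) ^ ν / (Real.Gamma (ν + 1 / 2) * Real.Gamma (1 / 2)) : ℝ)) : ℂ) *
    ∫ s in (-1 : ℝ)..1, Complex.exp (Complex.I * s * r) * (((1 - s ^ 2) ^ ((2 * ν - 1) / 2) : ℝ) : ℂ)

lemma bessel_gamma_lb (t : ℝ) (ht : 0 < t) : Real.exp (-2) ≤ Real.Gamma t := by
  rw [Real.Gamma_eq_integral ht]
  have hint : IntegrableOn (fun x : ℝ => Real.exp (-x) * x ^ (t - 1)) (Set.Ioi 0) :=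
    Real.GammaIntegral_convergent ht
  have hnn : 0 ≤ᵐ[volume.restrict (Set.Ioi (0:ℝ))] fun x : ℝ => Real.exp (-x) * x ^ (t - 1) := by
    filter_upwards [ae_restrict_mem measurableSet_Ioi] with x hx
    exact mul_nonneg (Real.exp_nonneg _) (Real.rpow_nonneg (le_of_lt hx) _)
  rcases le_or_gt 1 t with h1 | h1
  · have hsub : Set.Ioc (1:ℝ) 2 ⊆ Set.Ioi 0 := fun x hx => lt_of_lt_of_le one_pos hx.1.le
    have h2 : Real.exp (-2) * (volume (Set.Ioc (1:ℝ) 2)).toReal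
        ≤ ∫ x in Set.Ioc (1:ℝ) 2, Real.exp (-x) * x ^ (t - 1) := by
      refine le_of_eq_of_le (by rw [smul_eq_mul, mul_comm, measureReal_def])
        (setIntegral_ge_of_const_le measurableSet_Ioc (by simp) ?_ ?_)
      · intro x hx
        have h1x : (1:ℝ) ≤ x := hx.1.le
        have he : Real.exp (-2) ≤ Real.exp (-x) := Real.exp_le_exp.2 (by linarith [hx.2])
        have h2x : (1:ℝ) ≤ x ^ (t - 1) := Real.one_le_rpow h1x (by linarith)
        calc Real.exp (-2) = Real.exp (-2) * 1 := by ring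
          _ ≤ Real.exp (-x) * x ^ (t-1) := mul_le_mul he h2x one_pos.le (Real.exp_nonneg _)
      · exact hint.mono_set hsub
    have h3 : (volume (Set.Ioc (1:ℝ) 2)).toReal = 1 := by simp; norm_num
    calc Real.exp (-2) = Real.exp (-2) * (volume (Set.Ioc (1:ℝ) 2)).toReal := by rw [h3]; ring
      _ ≤ ∫ x in Set.Ioc (1:ℝ) 2, Real.exp (-x) * x ^ (t - 1) := h2
      _ ≤ ∫ x in Set.Ioi (0:ℝ), Real.exp (-x) * x ^ (t - 1) :=
          setIntegral_mono_set hint hnn (HasSubset.Subset.eventuallyLE hsub)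
  · have hsub : Set.Ioc (1/2:ℝ) 1 ⊆ Set.Ioi 0 := fun x hx => lt_trans (by norm_num) hx.1
    have h2 : Real.exp (-1) * (volume (Set.Ioc (1/2:ℝ) 1)).toReal
        ≤ ∫ x in Set.Ioc (1/2:ℝ) 1, Real.exp (-x) * x ^ (t - 1) := by
      refine le_of_eq_of_le (by rw [smul_eq_mul, mul_comm, measureReal_def])
        (setIntegral_ge_of_const_le measurableSet_Ioc (by simp) ?_ ?_)
      · intro x hx
        have hx0 : (0:ℝ) < x := hsub hx
        have he : Real.exp (-1) ≤ Real.exp (-x) := Real.exp_le_exp.2 (by linarith [hx.2])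
        have h2x : (1:ℝ) ≤ x ^ (t - 1) :=
          Real.one_le_rpow_of_pos_of_le_one_of_nonpos hx0 hx.2 (by linarith)
        calc Real.exp (-1) = Real.exp (-1) * 1 := by ring
          _ ≤ Real.exp (-x) * x ^ (t-1) := mul_le_mul he h2x one_pos.le (Real.exp_nonneg _)
      · exact hint.mono_set hsub
    have h3 : (volume (Set.Ioc (1/2:ℝ) 1)).toReal = 1/2 := by simp; norm_num
    have hkey : Real.exp (-2) ≤ Real.exp (-1) * (1/2 : ℝ) := by
      have h4 : (2:ℝ) ≤ Real.exp 1 := by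
        have := Real.add_one_le_exp (1:ℝ); linarith
      have h5 : Real.exp (-2) * 2 ≤ Real.exp (-2) * Real.exp 1 := by
        apply mul_le_mul_of_nonneg_left h4 (Real.exp_nonneg _)
      rw [← Real.exp_add] at h5
      norm_num at h5 ⊢
      linarith
    calc Real.exp (-2) ≤ Real.exp (-1) * (volume (Set.Ioc (1/2:ℝ) 1)).toReal := by
          rw [h3]; exact hkey
      _ ≤ ∫ x in Set.Ioc (1/2:ℝ) 1, Real.exp (-x) * x ^ (t - 1) := h2
      _ ≤ ∫ x in Set.Ioi (0:ℝ), Real.exp (-x) * x ^ (t - 1) :=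
          setIntegral_mono_set hint hnn (HasSubset.Subset.eventuallyLE hsub)

lemma bessel_h_intgr {b : ℝ} (hb : -1 < b) :
    IntervalIntegrable (fun s : ℝ => (1-s)^b + (1+s)^b) volume (-1) 1 := by
  have h0 : IntervalIntegrable (fun x : ℝ => x ^ b) volume 0 2 :=
    intervalIntegral.intervalIntegrable_rpow' hb
  have h1 : IntervalIntegrable (fun s : ℝ => (1-s)^b) volume (-1) 1 := by
    have := h0.comp_sub_left 1
    norm_num at this
    exact this.symm
  have h2 : IntervalIntegrable (fun s : ℝ => (1+s)^b) volume (-1) 1 := by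
    have := h0.comp_add_left 1
    norm_num at this
    exact this
  exact h1.add h2

lemma bessel_bound {b ν z : ℝ} (hb1 : -1 < b) (hb0 : b ≤ 0) (hbν : b ≤ ν - 1/2)
    (hν : 0 < ν + 1/2) (hz : 0 < z) :
    ‖besselJ ν z‖ ≤
      (z/2)^ν * Real.exp 2 * (∫ s in (-1:ℝ)..1, ((1-s)^b + (1+s)^b)) := by
  set K := ∫ s in (-1:ℝ)..1, ((1-s)^b + (1+s)^b) with hK
  have hKnn : 0 ≤ K := by
    apply intervalIntegral.integral_nonneg (by norm_num)
    intro s hs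
    have h1 : (0:ℝ) ≤ 1 - s := by linarith [hs.2]
    have h2 : (0:ℝ) ≤ 1 + s := by linarith [hs.1]
    positivity
  have hIb : ‖∫ s in (-1:ℝ)..1,
      Complex.exp (Complex.I * s * z) * (((1 - s ^ 2) ^ ((2 * ν - 1) / 2) : ℝ) : ℂ)‖ ≤ K := by
    refine le_trans (intervalIntegral.norm_integral_le_abs_of_norm_le ?_ (bessel_h_intgr hb1))
      (le_of_eq (abs_of_nonneg hKnn))
    have hone : ∀ᵐ s : ℝ ∂(volume.restrict (Set.uIoc (-1:ℝ) 1)), s ≠ 1 := by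
      apply ae_restrict_of_ae
      have := Set.Countable.ae_notMem (Set.countable_singleton (1:ℝ)) volume
      exact this.mono (by intro s hs; simpa using hs)
    filter_upwards [ae_restrict_mem measurableSet_uIoc, hone] with s hs hs1
    rw [Set.uIoc_of_le (by norm_num : (-1:ℝ) ≤ 1)] at hs
    have hs1' : s < 1 := lt_of_le_of_ne hs.2 hs1
    have hsm : -1 < s := hs.1
    have h1 : (0:ℝ) < 1 - s := by linarith
    have h2 : (0:ℝ) < 1 + s := by linarith
    have hbase : (0:ℝ) < 1 - s^2 := by nlinarith
    have hbase1 : 1 - s^2 ≤ 1 := by nlinarith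
    have hexp : ‖Complex.exp (Complex.I * s * z)‖ = 1 := by
      have : Complex.I * (s:ℂ) * (z:ℂ) = ((s*z : ℝ) : ℂ) * Complex.I := by push_cast; ring
      rw [this, Complex.norm_exp_ofReal_mul_I]
    rw [norm_mul, hexp, one_mul, Complex.norm_real, Real.norm_eq_abs,
      abs_of_nonneg (Real.rpow_nonneg hbase.le _)]
    have e1 : (2 * ν - 1)/2 = ν - 1/2 := by ring
    rw [e1]
    calc (1 - s^2) ^ (ν - 1/2) ≤ (1 - s^2) ^ b :=
          Real.rpow_le_rpow_of_exponent_ge hbase hbase1 hbν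
      _ ≤ (1-s)^b + (1+s)^b := by
          have hfac : (1 - s^2 : ℝ) = (1-s)*(1+s) := by ring
          rw [hfac, Real.mul_rpow h1.le h2.le]
          rcases le_or_gt 0 s with hs0 | hs0
          · have : (1+s)^b ≤ 1 := Real.rpow_le_one_of_one_le_of_nonpos (by linarith) hb0
            have hp : (0:ℝ) ≤ (1-s)^b := Real.rpow_nonneg h1.le _
            nlinarith [Real.rpow_nonneg h2.le b]
          · have : (1-s)^b ≤ 1 := Real.rpow_le_one_of_one_le_of_nonpos (by linarith) hb0
            have hp : (0:ℝ) ≤ (1+s)^b := Real.rpow_nonneg h2.le _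
            nlinarith [Real.rpow_nonneg h1.le b]
  have hG1 : Real.exp (-2) ≤ Real.Gamma (ν + 1/2) := bessel_gamma_lb _ hν
  have hG2 : (1:ℝ) ≤ Real.Gamma (1/2) := by
    rw [Real.Gamma_one_half_eq]
    rw [show (1:ℝ) = Real.sqrt 1 by simp]
    exact Real.sqrt_le_sqrt (by linarith [Real.pi_gt_three])
  have hGpos : 0 < Real.Gamma (ν + 1/2) * Real.Gamma (1/2) :=
    mul_pos (Real.Gamma_pos_of_pos hν) (Real.Gamma_pos_of_pos (by norm_num))
  have hPnn : (0:ℝ) ≤ (z / 2) ^ ν / (Real.Gamma (ν + 1 / 2) * Real.Gamma (1 / 2)) :=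
    div_nonneg (Real.rpow_nonneg (by linarith) _) hGpos.le
  have hP : (z / 2) ^ ν / (Real.Gamma (ν + 1 / 2) * Real.Gamma (1 / 2))
      ≤ (z/2)^ν * Real.exp 2 := by
    have hge : Real.exp (-2) ≤ Real.Gamma (ν + 1 / 2) * Real.Gamma (1 / 2) := by
      calc Real.exp (-2) = Real.exp (-2) * 1 := by ring
        _ ≤ Real.Gamma (ν + 1/2) * Real.Gamma (1/2) :=
          mul_le_mul hG1 hG2 one_pos.le (Real.Gamma_pos_of_pos hν).le
    calc (z / 2) ^ ν / (Real.Gamma (ν + 1 / 2) * Real.Gamma (1 / 2))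
        ≤ (z / 2) ^ ν / Real.exp (-2) := by
          apply div_le_div_of_nonneg_left (Real.rpow_nonneg (by linarith) _)
            (Real.exp_pos _) hge
      _ = (z/2)^ν * Real.exp 2 := by rw [Real.exp_neg, div_eq_mul_inv, inv_inv]
  rw [besselJ, norm_mul, Complex.norm_real, Real.norm_eq_abs, abs_of_nonneg hPnn]
  calc (z / 2) ^ ν / (Real.Gamma (ν + 1 / 2) * Real.Gamma (1 / 2)) *
        ‖∫ s in (-1:ℝ)..1,
          Complex.exp (Complex.I * s * z) * (((1 - s ^ 2) ^ ((2 * ν - 1) / 2) : ℝ) : ℂ)‖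
      ≤ ((z/2)^ν * Real.exp 2) * K := by
        apply mul_le_mul hP ?_ (norm_nonneg _) (by positivity)
        exact hIb
    _ = (z/2)^ν * Real.exp 2 * K := by ring

lemma bessel_poly_exp (m : ℕ) {β t : ℝ} (hβ : 0 < β) (ht : 0 ≤ t) :
    t^m ≤ ((Nat.factorial m : ℝ) / β^m) * Real.exp (β*t) := by
  have h := Real.pow_div_factorial_le_exp (β*t) (mul_nonneg hβ.le ht) m
  rw [div_le_iff₀ (by positivity)] at h
  rw [mul_pow] at h
  have hβm : (0:ℝ) < β^m := pow_pos hβ m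
  calc t^m = (β^m * t^m)/β^m := by field_simp
    _ ≤ (Real.exp (β*t) * (Nat.factorial m : ℝ))/β^m := by gcongr
    _ = ((Nat.factorial m : ℝ)/β^m) * Real.exp (β*t) := by ring

set_option maxHeartbeats 2000000

/-- Summation of the angular modes in the small-argument regime: if
`ν_k ≥ ν₀ > 0`, `ν_k ≥ c(1+k)^{1/(n−1)}` and `0 ≤ a_k ≤ C₀(1+ν_k²)^{(n−2)/2}` for all `k ≥ 1`,
then there is `C = C(n,ν₀,c,C₀)` such that `Σ_{k≥1} a_k |J_{ν_k}(z)| ≤ C z^{ν₀}`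
for all `0 < z ≤ 1`. -/
theorem bessel_mode_summation (n : ℕ) (hn : 3 ≤ n)
    (ν₀ c C₀ : ℝ) (hν₀ : 0 < ν₀) (hc : 0 < c) (hC₀ : 0 < C₀) :
    ∃ C : ℝ, 0 < C ∧ ∀ (ν a : ℕ+ → ℝ),
      (∀ k : ℕ+, ν₀ ≤ ν k) →
      (∀ k : ℕ+, c * (1 + (k : ℝ)) ^ ((1 : ℝ) / ((n : ℝ) - 1)) ≤ ν k) →
      (∀ k : ℕ+, 0 ≤ a k) →
      (∀ k : ℕ+, a k ≤ C₀ * (1 + (ν k) ^ 2) ^ (((n : ℝ) - 2) / 2)) →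
      ∀ z : ℝ, 0 < z → z ≤ 1 →
        Summable (fun k : ℕ+ => a k * ‖besselJ (ν k) z‖) ∧
        (∑' k : ℕ+, a k * ‖besselJ (ν k) z‖) ≤ C * z ^ ν₀ := by
  -- constants
  set m : ℕ := n - 2 with hm
  have hmr : (m:ℝ) = (n:ℝ) - 2 := by
    rw [hm]; push_cast [Nat.cast_sub (by omega : 2 ≤ n)]; ring
  set M : ℕ := 2*(n-1) with hM
  have hMr : (M:ℝ) = 2*((n:ℝ) - 1) := by
    rw [hM]; push_cast [Nat.cast_sub (by omega : 1 ≤ n)]; ring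
  set β : ℝ := Real.log 2 / 2 with hβ
  have hβpos : 0 < β := by
    have := Real.log_pos (by norm_num : (1:ℝ) < 2); positivity
  have hn1 : (0:ℝ) < (n:ℝ) - 1 := by
    have : (3:ℝ) ≤ (n:ℝ) := by exact_mod_cast hn
    linarith
  set b : ℝ := min ν₀ (1/2) - 1/2 with hb
  have hb1 : -1 < b := by
    have : 0 < min ν₀ (1/2) := lt_min hν₀ (by norm_num)
    rw [hb]; linarith
  have hb0 : b ≤ 0 := by
    have : min ν₀ (1/2) ≤ 1/2 := min_le_right _ _
    rw [hb]; linarith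
  set K : ℝ := ∫ s in (-1:ℝ)..1, ((1-s)^b + (1+s)^b) with hKdef
  have hKnn : 0 ≤ K := by
    apply intervalIntegral.integral_nonneg (by norm_num)
    intro s hs
    have h1 : (0:ℝ) ≤ 1 - s := by linarith [hs.2]
    have h2 : (0:ℝ) ≤ 1 + s := by linarith [hs.1]
    positivity
  clear_value K
  set A : ℝ := (1 + 1/ν₀)^m * ((Nat.factorial m : ℝ) / β^m) with hA
  have hApos : 0 < A := by rw [hA]; positivity
  set D : ℝ := (Nat.factorial M : ℝ) / (β*c)^M with hD
  have hDpos : 0 < D := by rw [hD]; positivity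
  -- summability of 1/k^2 over ℕ+
  have hsum2 : Summable (fun k : ℕ+ => ((k:ℝ)^2)⁻¹) := by
    have h := Real.summable_nat_pow_inv.mpr (by norm_num : 1 < 2)
    have h2 : Summable ((fun n : ℕ => ((n:ℝ)^2)⁻¹) ∘ (fun k : ℕ+ => (k:ℕ))) :=
      h.comp_injective PNat.coe_injective
    exact h2.congr (fun k => by simp [Function.comp])
  set S : ℝ := ∑' k : ℕ+, ((k:ℝ)^2)⁻¹ with hS
  have hSnn : 0 ≤ S := tsum_nonneg (fun k => by positivity)
  clear_value S
  refine ⟨max 1 (C₀ * Real.exp 2 * K * A * D * S), lt_of_lt_of_le one_pos (le_max_left _ _),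
    ?_⟩
  intro ν a hν1 hν2 ha1 ha2 z hz hz1
  -- Step 1
  have step1 : ∀ t : ℝ, ν₀ ≤ t → (1+t)^m * (2:ℝ)^(-t) ≤ A * Real.exp (-(β*t)) := by
    intro t hνt
    have hν0 : 0 < t := lt_of_lt_of_le hν₀ hνt
    have h2 : (2:ℝ)^(-t) = Real.exp (-(β*t)) * Real.exp (-(β*t)) := by
      rw [← Real.exp_add, Real.rpow_def_of_pos (by norm_num : (0:ℝ) < 2)]
      congr 1
      rw [hβ]; ring
    rw [h2, ← mul_assoc]
    apply mul_le_mul_of_nonneg_right _ (Real.exp_nonneg _)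
    have h3 : (1+t)^m ≤ A * Real.exp (β*t) := by
      have h4 : 1 + t ≤ (1 + 1/ν₀) * t := by
        have : 1 ≤ t/ν₀ := (one_le_div hν₀).2 hνt
        have : 1 ≤ (1/ν₀)*t := by rw [one_div, inv_mul_eq_div]; exact this
        nlinarith
      calc (1+t)^m ≤ ((1 + 1/ν₀) * t)^m := by
            apply pow_le_pow_left₀ (by linarith) h4
        _ = (1 + 1/ν₀)^m * t^m := mul_pow _ _ _
        _ ≤ (1 + 1/ν₀)^m * (((Nat.factorial m : ℝ)/β^m) * Real.exp (β*t)) := by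
            apply mul_le_mul_of_nonneg_left (bessel_poly_exp m hβpos hν0.le) (by positivity)
        _ = A * Real.exp (β*t) := by rw [hA]; ring
    calc (1+t)^m * Real.exp (-(β*t)) ≤ (A * Real.exp (β*t)) * Real.exp (-(β*t)) := by
          apply mul_le_mul_of_nonneg_right h3 (Real.exp_nonneg _)
      _ = A := by rw [mul_assoc, ← Real.exp_add]; simp
  -- Step 2
  have step2 : ∀ (k : ℕ+), Real.exp (-(β * ν k)) ≤ D / (k:ℝ)^2 := by
    intro k
    have hνk := hν2 k
    have hk1 : (1:ℝ) ≤ (k:ℝ) := by exact_mod_cast k.one_le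
    have hkpos : (0:ℝ) < (k:ℝ)^2 := by positivity
    set w : ℝ := (1 + (k:ℝ))^((1:ℝ)/((n:ℝ)-1)) with hw
    have hwpos : 0 < w := Real.rpow_pos_of_pos (by linarith) _
    have hwM : (k:ℝ)^2 ≤ w^M := by
      have e1 : w^M = (1 + (k:ℝ))^(((1:ℝ)/((n:ℝ)-1)) * (M:ℝ)) := by
        rw [hw, ← Real.rpow_natCast ((1 + (k:ℝ))^((1:ℝ)/((n:ℝ)-1))) M,
          ← Real.rpow_mul (by linarith)]
      have e2 : ((1:ℝ)/((n:ℝ)-1)) * (M:ℝ) = 2 := by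
        rw [hMr]; field_simp
      rw [e1, e2]
      rw [show ((2:ℝ) = ((2:ℕ):ℝ)) by norm_num, Real.rpow_natCast]
      apply pow_le_pow_left₀ (by linarith) (by linarith)
    have hbc : 0 < β * c := mul_pos hβpos hc
    have h5 : w^M ≤ ((Nat.factorial M : ℝ)/(β*c)^M) * Real.exp ((β*c)*w) :=
      bessel_poly_exp M hbc hwpos.le
    have h6 : (k:ℝ)^2 ≤ D * Real.exp ((β*c)*w) := by
      rw [hD]; exact le_trans hwM h5
    rw [le_div_iff₀ hkpos]
    calc Real.exp (-(β * ν k)) * (k:ℝ)^2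
        ≤ Real.exp (-(β*(c*w))) * (D * Real.exp ((β*c)*w)) := by
          apply mul_le_mul _ h6 hkpos.le (Real.exp_nonneg _)
          apply Real.exp_le_exp.2
          have : c * w ≤ ν k := by rw [hw]; exact hνk
          nlinarith
      _ = D * (Real.exp (-(β*(c*w))) * Real.exp ((β*c)*w)) := by ring
      _ = D := by rw [← Real.exp_add]; ring_nf; simp
  -- pointwise bound
  have hterm : ∀ k : ℕ+, a k * ‖besselJ (ν k) z‖
      ≤ (C₀ * Real.exp 2 * K * A * D * z^ν₀) * ((k:ℝ)^2)⁻¹ := by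
    intro k
    have hνk0 : 0 < ν k := lt_of_lt_of_le hν₀ (hν1 k)
    have hbν : b ≤ ν k - 1/2 := by
      have : min ν₀ (1/2) ≤ ν k := le_trans (min_le_left _ _) (hν1 k)
      rw [hb]; linarith
    have hJ : ‖besselJ (ν k) z‖ ≤ (z/2)^(ν k) * Real.exp 2 * K := by
      rw [hKdef]; exact bessel_bound hb1 hb0 hbν (by linarith) hz
    have hP : (1 + (ν k)^2)^(((n:ℝ)-2)/2) ≤ (1 + ν k)^m := by
      have h1 : 1 + (ν k)^2 ≤ (1 + ν k)^2 := by nlinarith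
      have hexp0 : (0:ℝ) ≤ ((n:ℝ)-2)/2 := by
        have : (3:ℝ) ≤ (n:ℝ) := by exact_mod_cast hn
        linarith
      calc (1 + (ν k)^2)^(((n:ℝ)-2)/2)
          ≤ ((1 + ν k)^2)^(((n:ℝ)-2)/2) :=
            Real.rpow_le_rpow (by positivity) h1 hexp0
        _ = (1 + ν k)^((2:ℝ) * (((n:ℝ)-2)/2)) := by
            rw [← Real.rpow_natCast (1 + ν k) 2, ← Real.rpow_mul (by linarith)]
            norm_num
        _ = (1 + ν k)^m := by
            rw [show (2:ℝ) * (((n:ℝ)-2)/2) = (m:ℝ) by rw [hmr]; ring, Real.rpow_natCast]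
    have hQ : (z/2)^(ν k) = z^(ν k) * (2:ℝ)^(-(ν k)) := by
      rw [Real.div_rpow hz.le (by norm_num : (0:ℝ) ≤ 2), Real.rpow_neg (by norm_num : (0:ℝ) ≤ 2),
        div_eq_mul_inv]
    have hzz : z^(ν k) ≤ z^ν₀ := Real.rpow_le_rpow_of_exponent_ge hz hz1 (hν1 k)
    calc a k * ‖besselJ (ν k) z‖
        ≤ (C₀ * (1 + (ν k)^2)^(((n:ℝ)-2)/2)) * ((z/2)^(ν k) * Real.exp 2 * K) := by
          apply mul_le_mul (ha2 k) hJ (norm_nonneg _) (by positivity)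
      _ = (C₀ * Real.exp 2 * K) * ((1 + (ν k)^2)^(((n:ℝ)-2)/2) * (z^(ν k) * (2:ℝ)^(-(ν k)))) := by
          rw [hQ]; ring
      _ ≤ (C₀ * Real.exp 2 * K) * ((1 + ν k)^m * (z^ν₀ * (2:ℝ)^(-(ν k)))) := by
          have h2nn : (0:ℝ) ≤ (2:ℝ)^(-(ν k)) := Real.rpow_nonneg (by norm_num) _
          apply mul_le_mul_of_nonneg_left _ (by positivity)
          apply mul_le_mul hP (mul_le_mul_of_nonneg_right hzz h2nn)
            (by positivity) (by positivity)
      _ = (C₀ * Real.exp 2 * K * z^ν₀) * ((1 + ν k)^m * (2:ℝ)^(-(ν k))) := by ring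
      _ ≤ (C₀ * Real.exp 2 * K * z^ν₀) * (A * Real.exp (-(β * ν k))) := by
          apply mul_le_mul_of_nonneg_left (step1 (ν k) (hν1 k)) (by positivity)
      _ ≤ (C₀ * Real.exp 2 * K * z^ν₀) * (A * (D / (k:ℝ)^2)) := by
          apply mul_le_mul_of_nonneg_left
            (mul_le_mul_of_nonneg_left (step2 k) hApos.le) (by positivity)
      _ = (C₀ * Real.exp 2 * K * A * D * z^ν₀) * ((k:ℝ)^2)⁻¹ := by
          rw [div_eq_mul_inv]; ring
  have hsumb : Summable (fun k : ℕ+ => (C₀ * Real.exp 2 * K * A * D * z^ν₀) * ((k:ℝ)^2)⁻¹) :=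
    hsum2.mul_left _
  have hnn : ∀ k : ℕ+, 0 ≤ a k * ‖besselJ (ν k) z‖ :=
    fun k => mul_nonneg (ha1 k) (norm_nonneg _)
  have hsummain : Summable (fun k : ℕ+ => a k * ‖besselJ (ν k) z‖) :=
    Summable.of_nonneg_of_le hnn hterm hsumb
  refine ⟨hsummain, ?_⟩
  calc (∑' k : ℕ+, a k * ‖besselJ (ν k) z‖)
      ≤ ∑' k : ℕ+, (C₀ * Real.exp 2 * K * A * D * z^ν₀) * ((k:ℝ)^2)⁻¹ :=
        Summable.tsum_le_tsum hterm hsummain hsumb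
    _ = (C₀ * Real.exp 2 * K * A * D * z^ν₀) * S := by rw [tsum_mul_left, hS]
    _ = (C₀ * Real.exp 2 * K * A * D * S) * z^ν₀ := by ring
    _ ≤ max 1 (C₀ * Real.exp 2 * K * A * D * S) * z^ν₀ := by
        apply mul_le_mul_of_nonneg_right (le_max_right _ _) (Real.rpow_nonneg hz.le _)
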